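/- Let G be a second countable locally compact group with Haar measure μ, and let F ⊆ G be closed with {gF : g ∈ G} of finite VC-dimension. Define ΔF = {x ∈ ∂F : μ(U ∩ ∂F) > 0 for every neighborhood U of x}. Then ΔF ⊆ cl(int F) ∩ cl(Fᶜ). -/

import Mathlib

open MeasureTheory Set Pointwise Topology Filter
open scoped ENNReal

variable {G : Type*}

def Shatters (𝓕 : Set (Set G)) (A : Finset G) : Prop :=
  ∀ B ⊆ A, ∃ S ∈ 𝓕, S ∩ (A : Set G) = (B : Set G)

def FiniteVC (𝓕 : Set (Set G)) : Prop :=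
  ∃ n : ℕ, ∀ A : Finset G, A.card = n → ¬ Shatters 𝓕 A

section Aux

variable [Group G] [TopologicalSpace G] [IsTopologicalGroup G] [T2Space G]
    [LocallyCompactSpace G] [SecondCountableTopology G]
    [MeasurableSpace G] [BorelSpace G]

/-- Translation continuity of Haar measure on finite-measure sets. -/
lemma hvc_smul_diff_lt (μ : Measure G) [μ.IsHaarMeasure]
    {C : Set G} (hC : MeasurableSet C) (hfin : μ C ≠ ⊤) {ε : ℝ≥0∞} (hε : ε ≠ 0) :
    ∃ T : Set G, IsOpen T ∧ (1 : G) ∈ T ∧ ∀ t ∈ T, μ (t • C \ C) < ε ∧ μ (C \ t • C) < ε := by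
  have hhalf : (ε / 2) ≠ 0 := by
    simpa using (ENNReal.half_pos hε).ne'
  obtain ⟨K, hKC, hK, hμK⟩ := hC.exists_isCompact_lt_add hfin hhalf
  obtain ⟨U, hCU, hU, hμU⟩ := C.exists_isOpen_lt_add hfin hhalf
  have hKU : K ⊆ U := hKC.trans hCU
  obtain ⟨Vn, hVn, hVK⟩ := compact_open_separated_mul_left hK hU hKU
  have hdiffK : μ (C \ K) < ε / 2 :=
    measure_diff_lt_of_lt_add hK.isClosed.nullMeasurableSet hKC hK.measure_lt_top.ne hμK
  have hdiffU : μ (U \ C) < ε / 2 :=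
    measure_diff_lt_of_lt_add hC.nullMeasurableSet hCU hfin hμU
  have key : ∀ t ∈ interior Vn, μ (t • C \ C) < ε := by
    intro t ht
    have h1 : t • C \ C ⊆ t • (C \ K) ∪ (U \ C) := by
      rintro y ⟨hyC, hyC'⟩
      rcases hyC with ⟨c, hc, rfl⟩
      by_cases hcK : c ∈ K
      · right
        refine ⟨?_, hyC'⟩
        have : t • K ⊆ U := (smul_set_subset_smul (interior_subset ht)).trans hVK
        exact this ⟨c, hcK, rfl⟩
      · left
        exact ⟨c, ⟨hc, hcK⟩, rfl⟩
    calc μ (t • C \ C) ≤ μ (t • (C \ K) ∪ (U \ C)) := measure_mono h1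
      _ ≤ μ (t • (C \ K)) + μ (U \ C) := measure_union_le _ _
      _ = μ (C \ K) + μ (U \ C) := by rw [measure_smul]
      _ < ε / 2 + ε / 2 := ENNReal.add_lt_add hdiffK hdiffU
      _ = ε := ENNReal.add_halves ε
  refine ⟨interior Vn ∩ (interior Vn)⁻¹, isOpen_interior.inter isOpen_interior.inv,
    ⟨mem_interior_iff_mem_nhds.2 hVn, by simpa using mem_interior_iff_mem_nhds.2 hVn⟩, ?_⟩
  intro t ht
  refine ⟨key t ht.1, ?_⟩
  have h2 : C \ t • C = t • (t⁻¹ • C \ C) := by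
    rw [smul_set_sdiff, smul_inv_smul]
  rw [h2, measure_smul]
  exact key t⁻¹ (Set.mem_inv.1 ht.2)

/-- The atoms of the boolean algebra generated by the translates corresponding to the
points `a i`, intersected with the window `W` and the support condition at `x`. -/
def VCAtom (W Λ F : Set G) (x : G) {k : ℕ} (a : Fin k → G) (I : Finset (Fin k)) : Set G :=
  {g | g ∈ W ∧ g⁻¹ * x ∈ Λ ∧ ∀ i, (i ∈ I → g⁻¹ * a i ∈ Λ) ∧ (i ∉ I → g⁻¹ * a i ∉ F)}

lemma VCAtom_measurable {W Λ F : Set G} {x : G} {k : ℕ} {a : Fin k → G} {I : Finset (Fin k)}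
    (hW : MeasurableSet W) (hΛ : MeasurableSet Λ) (hFc : IsClosed F) :
    MeasurableSet (VCAtom W Λ F x a I) := by
  have hmap : ∀ c : G, Measurable fun g : G => g⁻¹ * c := fun c =>
    (continuous_inv.mul continuous_const).measurable
  have : VCAtom W Λ F x a I =
      (W ∩ (fun g : G => g⁻¹ * x) ⁻¹' Λ) ∩
        ⋂ i, ({g : G | i ∈ I → g⁻¹ * a i ∈ Λ} ∩ {g : G | i ∉ I → g⁻¹ * a i ∉ F}) := by
    ext g
    simp only [VCAtom, mem_inter_iff, mem_iInter, mem_setOf_eq, mem_preimage]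
    tauto
  rw [this]
  refine ((hW.inter ((hmap x) hΛ)).inter (MeasurableSet.iInter fun i => ?_))
  by_cases hi : i ∈ I
  · simp only [hi, not_true_eq_false, false_implies, true_implies]
    have : {g : G | g⁻¹ * a i ∈ Λ} = (fun g : G => g⁻¹ * a i) ⁻¹' Λ := rfl
    simpa [this] using ((hmap (a i)) hΛ).inter MeasurableSet.univ
  · simp only [hi, not_false_eq_true, true_implies, false_implies]
    have : {g : G | g⁻¹ * a i ∉ F} = (fun g : G => g⁻¹ * a i) ⁻¹' Fᶜ := rfl
    simpa [this] using MeasurableSet.univ.inter ((hmap (a i)) hFc.measurableSet.compl)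

lemma hvc_snoc_injective {k : ℕ} {a : Fin k → G} {b : G}
    (hainj2 : Function.Injective a) (hb : b ∉ Set.range a) :
    Function.Injective (Fin.snoc a b) := by
  intro i j hij
  induction i using Fin.lastCases with
  | last =>
    induction j using Fin.lastCases with
    | last => rfl
    | cast j =>
      rw [Fin.snoc_last, Fin.snoc_castSucc] at hij
      exact absurd ⟨j, hij.symm⟩ hb
  | cast i =>
    induction j using Fin.lastCases with
    | last =>
      rw [Fin.snoc_last, Fin.snoc_castSucc] at hij
      exact absurd ⟨i, hij⟩ hb
    | cast j =>
      rw [Fin.snoc_castSucc, Fin.snoc_castSucc] at hij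
      rw [hainj2 hij]

/-- The inductive step: given `k` points whose atoms all have positive measure,
find one more point. -/
lemma hvc_step (μ : Measure G) [μ.IsHaarMeasure]
    {W V U K₂ Λ F : Set G} {x : G}
    (hFc : IsClosed F) (hUF : U ∩ interior F = ∅)
    (hWmeas : MeasurableSet W) (hWfin : μ W ≠ ⊤)
    (hΛmeas : MeasurableSet Λ) (hΛF : Λ ⊆ F)
    (hwinK : ∀ g ∈ W, ∀ v ∈ V, g⁻¹ * v ∈ K₂)
    (hK₂U : K₂ ⊆ U) (hK₂c : IsCompact K₂)
    (hVnhds : V ∈ nhds x) (hxV : x ∈ V)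
    (hNB : (nhdsWithin x {x}ᶜ).NeBot)
    {k : ℕ} {a : Fin k → G}
    (haV : ∀ i, a i ∈ V)
    (hapos : ∀ I : Finset (Fin k), 0 < μ (VCAtom W Λ F x a I)) :
    ∃ b : G, b ∈ V ∧ b ∉ Set.range a ∧
      ∀ J : Finset (Fin (k + 1)), 0 < μ (VCAtom W Λ F x (Fin.snoc a b) J) := by
  classical
  set CΛ : Set G := (Λ ∩ K₂)⁻¹ with hCΛdef
  set CF : Set G := (F ∩ K₂)⁻¹ with hCFdef
  have hCΛmeas : MeasurableSet CΛ := (hΛmeas.inter hK₂c.isClosed.measurableSet).inv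
  have hCFmeas : MeasurableSet CF := (hFc.measurableSet.inter hK₂c.isClosed.measurableSet).inv
  have hCΛfin : μ CΛ ≠ ⊤ := by
    refine ne_top_of_le_ne_top hK₂c.inv.measure_lt_top.ne (measure_mono ?_)
    exact Set.inv_subset_inv.2 inter_subset_right
  have hCFfin : μ CF ≠ ⊤ := by
    refine ne_top_of_le_ne_top hK₂c.inv.measure_lt_top.ne (measure_mono ?_)
    exact Set.inv_subset_inv.2 inter_subset_right
  -- the window equivalences
  have hwinΛ : ∀ g ∈ W, ∀ v ∈ V, (g⁻¹ * v ∈ Λ ↔ g ∈ v • CΛ) := by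
    intro g hg v hv
    rw [mem_smul_set_iff_inv_smul_mem, smul_eq_mul, Set.mem_inv, mul_inv_rev, inv_inv]
    constructor
    · intro h; exact ⟨h, hwinK g hg v hv⟩
    · intro h; exact h.1
  have hwinF : ∀ g ∈ W, ∀ v ∈ V, (g⁻¹ * v ∈ F ↔ g ∈ v • CF) := by
    intro g hg v hv
    rw [mem_smul_set_iff_inv_smul_mem, smul_eq_mul, Set.mem_inv, mul_inv_rev, inv_inv]
    constructor
    · intro h; exact ⟨h, hwinK g hg v hv⟩
    · intro h; exact h.1
  have hCΛ_back : ∀ v g : G, g ∈ v • CΛ → g⁻¹ * v ∈ Λ := by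
    intro v g h
    rw [mem_smul_set_iff_inv_smul_mem, smul_eq_mul, Set.mem_inv, mul_inv_rev, inv_inv] at h
    exact h.1
  set A : Finset (Fin k) → Set G := fun I => VCAtom W Λ F x a I with hAdef
  have hAmeas : ∀ I, MeasurableSet (A I) := fun I => VCAtom_measurable hWmeas hΛmeas hFc
  have hAW : ∀ I, A I ⊆ W := fun I g hg => hg.1
  have hAfin : ∀ I, μ (A I) ≠ ⊤ := fun I => ne_top_of_le_ne_top hWfin (measure_mono (hAW I))
  -- minimum of the atom measures
  obtain ⟨I₀, hI₀⟩ : ∃ I₀ : Finset (Fin k), ∀ I, μ (A I₀) ≤ μ (A I) :=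
    Finite.exists_min fun I => μ (A I)
  have hm0 : μ (A I₀) ≠ 0 := (hapos I₀).ne'
  obtain ⟨T, hTopen, hT1, hTd⟩ := hvc_smul_diff_lt μ hCΛmeas hCΛfin hm0
  -- all atoms lie in `x • CΛ`
  have hAx : ∀ I, A I ⊆ x • CΛ := by
    intro I g hg
    exact (hwinΛ g hg.1 x hxV).1 hg.2.1
  -- in-splitting: any point of `x • T ∩ V` cuts every atom in positive measure
  have hin : ∀ b, b ∈ x • T → ∀ I, 0 < μ (A I ∩ b • CΛ) := by
    intro b hbT I
    obtain ⟨t, ht, hbt⟩ := hbT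
    have hbt' : b • CΛ = x • (t • CΛ) := by
      rw [← hbt]; exact (smul_smul x t CΛ).symm
    have hsub : A I \ b • CΛ ⊆ x • (CΛ \ t • CΛ) := by
      rintro g ⟨hgA, hgn⟩
      obtain ⟨c, hc, rfl⟩ := hAx I hgA
      refine ⟨c, ⟨hc, fun hct => hgn ?_⟩, rfl⟩
      rw [hbt']
      exact smul_mem_smul_set hct
    rcases eq_or_ne (μ (A I ∩ b • CΛ)) 0 with h0 | h0
    · exfalso
      have hchain : μ (A I) < μ (A I) := by
        calc μ (A I) ≤ μ (A I ∩ b • CΛ) + μ (A I \ b • CΛ) :=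
              measure_le_inter_add_diff μ _ _
          _ ≤ 0 + μ (x • (CΛ \ t • CΛ)) := add_le_add h0.le (measure_mono hsub)
          _ = μ (CΛ \ t • CΛ) := by rw [zero_add, measure_smul]
          _ < μ (A I₀) := (hTd t ht).2
          _ ≤ μ (A I) := hI₀ I
      exact lt_irrefl _ hchain
    · exact pos_iff_ne_zero.2 h0
  -- out-splitting: key finite-cover argument
  have KEY : ∀ s : Finset (Finset (Fin k)), ∀ O : Set G, IsOpen O → O.Nonempty →
      O ⊆ interior V → ∃ p ∈ O, ∀ I ∈ s, 0 < μ (A I \ p • CF) := by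
    intro s
    induction s using Finset.induction_on with
    | empty =>
      intro O _ hOne _
      exact ⟨hOne.some, hOne.some_mem, by simp⟩
    | insert I s hIs ih =>
      intro O hOo hOne hOV
      have hopen_pos : IsOpen {p : G | 0 < μ (A I \ p • CF)} := by
        rw [isOpen_iff_mem_nhds]
        intro p₀ hp₀
        have hδfin : μ (A I \ p₀ • CF) ≠ ⊤ :=
          ne_top_of_le_ne_top (hAfin I) (measure_mono diff_subset)
        obtain ⟨T₂, hT₂o, hT₂1, hT₂d⟩ := hvc_smul_diff_lt μ hCFmeas hCFfin hp₀.ne'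
        have hmem : p₀ ∈ p₀ • T₂ := by
          refine ⟨1, hT₂1, ?_⟩; simp
        refine Filter.mem_of_superset ((hT₂o.smul p₀).mem_nhds hmem) ?_
        rintro _ ⟨t, ht, rfl⟩
        show 0 < μ (A I \ (p₀ * t) • CF)
        rcases eq_or_ne (μ (A I \ (p₀ * t) • CF)) 0 with h0 | h0
        · exfalso
          have hsub2 : A I \ p₀ • CF ⊆ (A I \ (p₀ * t) • CF) ∪ ((p₀ * t) • CF \ p₀ • CF) := by
            rintro g ⟨hgA, hgn⟩
            by_cases hg2 : g ∈ (p₀ * t) • CF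
            · right; exact ⟨hg2, hgn⟩
            · left; exact ⟨hgA, hg2⟩
          have : (p₀ * t) • CF \ p₀ • CF = p₀ • (t • CF \ CF) := by
            rw [smul_set_sdiff, smul_smul]
          have hchain : μ (A I \ p₀ • CF) < μ (A I \ p₀ • CF) := by
            calc μ (A I \ p₀ • CF)
                ≤ μ (A I \ (p₀ * t) • CF) + μ ((p₀ * t) • CF \ p₀ • CF) :=
                  le_trans (measure_mono hsub2) (measure_union_le _ _)
              _ = μ (t • CF \ CF) := by rw [h0, zero_add, this, measure_smul]
              _ < μ (A I \ p₀ • CF) := (hT₂d t ht).1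
          exact lt_irrefl _ hchain
        · exact pos_iff_ne_zero.2 h0
      set O' : Set G := O ∩ {p : G | 0 < μ (A I \ p • CF)} with hO'def
      rcases O'.eq_empty_or_nonempty with hO' | hO'
      · exfalso
        have hzero : ∀ p ∈ O, μ (A I \ p • CF) = 0 := by
          intro p hp
          by_contra h
          have : p ∈ O' := ⟨hp, pos_iff_ne_zero.2 h⟩
          rw [hO'] at this
          exact this
        set s₂ : Set (G × G) := {q : G × G | q.1 ∈ A I ∧ q.2 ∈ O ∧ q.1⁻¹ * q.2 ∉ F} with hs₂def
        have hs₂meas : MeasurableSet s₂ := by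
          have h1 : MeasurableSet {q : G × G | q.1 ∈ A I} :=
            (hAmeas I).preimage measurable_fst
          have h2 : MeasurableSet {q : G × G | q.2 ∈ O} :=
            hOo.measurableSet.preimage measurable_snd
          have h3 : MeasurableSet {q : G × G | q.1⁻¹ * q.2 ∉ F} :=
            (measurable_fst.inv.mul measurable_snd) hFc.measurableSet.compl
          exact (h1.inter (h2.inter h3))
        have hprod : (μ.prod μ) s₂ = 0 := by
          rw [Measure.prod_apply_symm hs₂meas]
          have hzero2 : ∀ p : G, μ ((fun g => (g, p)) ⁻¹' s₂) = 0 := by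
            intro p
            by_cases hp : p ∈ O
            · have hset : (fun g => (g, p)) ⁻¹' s₂ = A I \ p • CF := by
                ext g
                simp only [mem_preimage, hs₂def, mem_setOf_eq, mem_diff]
                constructor
                · rintro ⟨hgA, -, hgF⟩
                  exact ⟨hgA, fun hc => hgF ((hwinF g (hAW I hgA) p
                    (interior_subset (hOV hp))).2 hc)⟩
                · rintro ⟨hgA, hgc⟩
                  exact ⟨hgA, hp, fun hc => hgc ((hwinF g (hAW I hgA) p
                    (interior_subset (hOV hp))).1 hc)⟩
              rw [hset]
              exact hzero p hp
            · have hset : (fun g => (g, p)) ⁻¹' s₂ = ∅ := by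
                ext g
                simp only [mem_preimage, hs₂def, mem_setOf_eq, mem_empty_iff_false, iff_false]
                rintro ⟨-, hpo, -⟩
                exact hp hpo
              rw [hset]
              exact measure_empty
          simp only [hzero2]
          simp
        have hae := Measure.measure_ae_null_of_prod_null hprod
        have hE : μ {g : G | μ (Prod.mk g ⁻¹' s₂) ≠ 0} = 0 := by
          simpa [Filter.EventuallyEq, ae_iff] using hae
        obtain ⟨g, hgA, hgnull⟩ : ∃ g ∈ A I, μ (Prod.mk g ⁻¹' s₂) = 0 := by
          by_contra h
          push_neg at h
          exact (hapos I).ne' (measure_mono_null (fun g hg => h g hg) hE)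
        have hsec : Prod.mk g ⁻¹' s₂ = O \ g • F := by
          ext p
          simp only [mem_preimage, hs₂def, mem_setOf_eq, mem_diff]
          constructor
          · rintro ⟨-, hpO, hpF⟩
            refine ⟨hpO, fun hc => hpF ?_⟩
            rw [mem_smul_set_iff_inv_smul_mem, smul_eq_mul] at hc
            exact hc
          · rintro ⟨hpO, hpc⟩
            refine ⟨hgA, hpO, fun hc => hpc ?_⟩
            rw [mem_smul_set_iff_inv_smul_mem, smul_eq_mul]
            exact hc
        rw [hsec] at hgnull
        have hOg : O ⊆ g • F := by
          rw [← diff_eq_empty]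
          by_contra hne
          exact ((hOo.sdiff (hFc.smul g)).measure_pos μ
            (nonempty_iff_ne_empty.2 hne)).ne' hgnull
        obtain ⟨p, hp⟩ := hOne
        have h3 : g⁻¹ • O ⊆ interior F := by
          refine interior_maximal ?_ (hOo.smul g⁻¹)
          rintro _ ⟨o, ho, rfl⟩
          have := hOg ho
          rwa [mem_smul_set_iff_inv_smul_mem] at this
        have h4 : g⁻¹ * p ∈ U := hK₂U (hwinK g (hAW I hgA) p (interior_subset (hOV hp)))
        have h5 : g⁻¹ * p ∈ interior F := by
          have : g⁻¹ • p ∈ interior F := h3 ⟨p, hp, rfl⟩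
          rwa [smul_eq_mul] at this
        exact (eq_empty_iff_forall_notMem.1 hUF) (g⁻¹ * p) ⟨h4, h5⟩
      · obtain ⟨p, hpO, hps⟩ := ih O' (hOo.inter hopen_pos) hO'
          ((inter_subset_left).trans hOV)
        refine ⟨p, hpO.1, ?_⟩
        intro I' hI'
        rcases Finset.mem_insert.1 hI' with rfl | hI'
        · exact hpO.2
        · exact hps I' hI'
  -- the region where the new point is chosen
  have hxint : x ∈ interior V := mem_interior_iff_mem_nhds.2 hVnhds
  have hxT : x ∈ x • T := ⟨1, hT1, by simp⟩
  have hOopen : IsOpen (interior V ∩ x • T) := isOpen_interior.inter (hTopen.smul x)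
  have hinf : (interior V ∩ x • T).Infinite := by
    haveI := hNB
    exact infinite_of_mem_nhds x (hOopen.mem_nhds ⟨hxint, hxT⟩)
  have hOAne : ((interior V ∩ x • T) \ Set.range a).Nonempty :=
    (hinf.diff (Set.finite_range a)).nonempty
  have hOAopen : IsOpen ((interior V ∩ x • T) \ Set.range a) :=
    hOopen.sdiff (Set.finite_range a).isClosed
  obtain ⟨b, hbO, hbout⟩ := KEY Finset.univ _ hOAopen hOAne
    ((diff_subset).trans inter_subset_left)
  have hbV : b ∈ V := interior_subset hbO.1.1
  have hbT : b ∈ x • T := hbO.1.2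
  refine ⟨b, hbV, hbO.2, ?_⟩
  intro J
  set I : Finset (Fin k) := Finset.univ.filter (fun i => i.castSucc ∈ J) with hIdef
  have hb_in : ∀ g ∈ b • CΛ, g⁻¹ * b ∈ Λ := fun g hg => hCΛ_back b g hg
  by_cases hlast : Fin.last k ∈ J
  · refine lt_of_lt_of_le (hin b hbT I) (measure_mono ?_)
    rintro g ⟨hgA, hgb⟩
    refine ⟨hgA.1, hgA.2.1, ?_⟩
    intro i'
    induction i' using Fin.lastCases with
    | last =>
      constructor
      · intro _
        rw [Fin.snoc_last]
        exact hb_in g hgb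
      · intro h
        exact absurd hlast h
    | cast i =>
      constructor
      · intro hi
        rw [Fin.snoc_castSucc]
        exact (hgA.2.2 i).1 (Finset.mem_filter.2 ⟨Finset.mem_univ _, hi⟩)
      · intro hi
        rw [Fin.snoc_castSucc]
        exact (hgA.2.2 i).2 (fun hc => hi ((Finset.mem_filter.1 hc).2))
  · refine lt_of_lt_of_le (hbout I (Finset.mem_univ I)) (measure_mono ?_)
    rintro g ⟨hgA, hgb⟩
    refine ⟨hgA.1, hgA.2.1, ?_⟩
    intro i'
    induction i' using Fin.lastCases with
    | last =>
      constructor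
      · intro h
        exact absurd h hlast
      · intro _
        rw [Fin.snoc_last]
        intro hc
        exact hgb ((hwinF g hgA.1 b hbV).1 hc)
    | cast i =>
      constructor
      · intro hi
        rw [Fin.snoc_castSucc]
        exact (hgA.2.2 i).1 (Finset.mem_filter.2 ⟨Finset.mem_univ _, hi⟩)
      · intro hi
        rw [Fin.snoc_castSucc]
        exact (hgA.2.2 i).2 (fun hc => hi ((Finset.mem_filter.1 hc).2))

end Aux

/-- For a closed VC-set `F`, the set `ΔF` of points of `∂F` all of whose
neighborhoods meet `∂F` in positive measure is contained in
`cl(int F) ∩ cl(Fᶜ)`. -/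
theorem delta_subset_closure_int_inter_closure_compl
    [Group G] [TopologicalSpace G] [IsTopologicalGroup G] [T2Space G]
    [LocallyCompactSpace G] [SecondCountableTopology G]
    [MeasurableSpace G] [BorelSpace G]
    (μ : Measure G) [μ.IsHaarMeasure]
    (F : Set G) (hF : IsClosed F)
    (hVC : FiniteVC {S : Set G | ∃ g : G, S = g • F}) :
    {x ∈ frontier F | ∀ U ∈ nhds x, 0 < μ (U ∩ frontier F)} ⊆
      closure (interior F) ∩ closure Fᶜ := by
  classical
  intro x hx
  obtain ⟨hxf, hxpos⟩ := hx
  have hxcl : x ∈ closure Fᶜ := by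
    rw [frontier_eq_closure_inter_closure] at hxf
    exact hxf.2
  refine ⟨?_, hxcl⟩
  by_contra hxint
  rw [mem_closure_iff] at hxint
  push_neg at hxint
  obtain ⟨U, hUopen, hxU, hUF⟩ := hxint
  have hxF : x ∈ F := hF.frontier_subset hxf
  have hfrF : frontier F ⊆ F := hF.frontier_subset
  -- local positivity of F at x
  have hpos : ∀ N ∈ nhds x, 0 < μ (F ∩ U ∩ N) := by
    intro N hN
    have h1 : 0 < μ ((U ∩ N) ∩ frontier F) :=
      hxpos (U ∩ N) (Filter.inter_mem (hUopen.mem_nhds hxU) hN)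
    refine lt_of_lt_of_le h1 (measure_mono ?_)
    rintro y ⟨⟨hyU, hyN⟩, hyf⟩
    exact ⟨⟨hfrF hyf, hyU⟩, hyN⟩
  -- the support set Λ
  obtain ⟨bas, hbascount, -, hbasis⟩ := TopologicalSpace.exists_countable_basis G
  set Bad : Set G := ⋃₀ {s | s ∈ bas ∧ μ (F ∩ U ∩ s) = 0} with hBaddef
  have hBadopen : IsOpen Bad := isOpen_sUnion fun s hs => hbasis.isOpen hs.1
  set Λ : Set G := (F ∩ U) \ Bad with hΛdef
  have hΛmeas : MeasurableSet Λ :=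
    (hF.measurableSet.inter hUopen.measurableSet).diff hBadopen.measurableSet
  have hΛF : Λ ⊆ F := fun y hy => hy.1.1
  have hnull : μ ((F ∩ U) ∩ Bad) = 0 := by
    have : (F ∩ U) ∩ Bad = ⋃ s ∈ {s | s ∈ bas ∧ μ (F ∩ U ∩ s) = 0}, (F ∩ U ∩ s) := by
      rw [hBaddef, sUnion_eq_biUnion, inter_iUnion₂]
    rw [this]
    exact (measure_biUnion_null_iff (hbascount.mono (sep_subset _ _))).2 fun s hs => hs.2
  have hself : ∀ z ∈ Λ, ∀ N ∈ nhds z, 0 < μ (Λ ∩ N) := by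
    intro z hz N hN
    by_contra h
    rw [not_lt, le_zero_iff] at h
    obtain ⟨s, hsb, hzs, hsN⟩ := hbasis.mem_nhds_iff.1 hN
    have hs0 : μ (F ∩ U ∩ s) = 0 := by
      have hsub : F ∩ U ∩ s ⊆ (Λ ∩ N) ∪ ((F ∩ U) ∩ Bad) := by
        rintro y ⟨hyFU, hys⟩
        by_cases hyB : y ∈ Bad
        · exact Or.inr ⟨hyFU, hyB⟩
        · exact Or.inl ⟨⟨hyFU, hyB⟩, hsN hys⟩
      refine measure_mono_null hsub ?_
      refine measure_union_null h hnull
    exact hz.2 ⟨s, ⟨hsb, hs0⟩, hzs⟩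
  have hxΛ : x ∈ Λ := by
    refine ⟨⟨hxF, hxU⟩, ?_⟩
    rintro ⟨s, ⟨hsb, hs0⟩, hxs⟩
    exact (hpos s ((hbasis.isOpen hsb).mem_nhds hxs)).ne' hs0
  -- geometric setup
  have hcontmul : Continuous fun p : G × G => p.1⁻¹ * p.2 :=
    (continuous_fst.inv.mul continuous_snd)
  have hpre : (fun p : G × G => p.1⁻¹ * p.2) ⁻¹' U ∈ nhds ((1 : G), x) := by
    refine hcontmul.continuousAt.preimage_mem_nhds ?_
    simpa using hUopen.mem_nhds hxU
  obtain ⟨W₁, hW₁, V₁, hV₁, hWV⟩ := mem_nhds_prod_iff.1 hpre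
  obtain ⟨W, hWnhds, hWW₁, hWcomp⟩ := local_compact_nhds hW₁
  obtain ⟨V, hVnhds, hVV₁, hVcomp⟩ := local_compact_nhds hV₁
  have hWmeas : MeasurableSet W := hWcomp.isClosed.measurableSet
  have hWfin : μ W ≠ ⊤ := hWcomp.measure_lt_top.ne
  have hwinU : ∀ g ∈ W, ∀ v ∈ V, g⁻¹ * v ∈ U := by
    intro g hg v hv
    exact hWV (Set.mk_mem_prod (hWW₁ hg) (hVV₁ hv))
  set K₂ : Set G := W⁻¹ * V with hK₂def
  have hK₂c : IsCompact K₂ := hWcomp.inv.mul hVcomp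
  have hwinK : ∀ g ∈ W, ∀ v ∈ V, g⁻¹ * v ∈ K₂ :=
    fun g hg v hv => Set.mul_mem_mul (Set.inv_mem_inv.2 hg) hv
  have hK₂U : K₂ ⊆ U := by
    rintro y ⟨gi, hgi, v, hv, rfl⟩
    rw [Set.mem_inv] at hgi
    have := hwinU gi⁻¹ hgi v hv
    rwa [inv_inv] at this
  have hxV : x ∈ V := mem_of_mem_nhds hVnhds
  -- non-isolation of x
  have hNB : (nhdsWithin x {x}ᶜ).NeBot := by
    have h1 : (nhdsWithin x Fᶜ).NeBot := mem_closure_iff_nhdsWithin_neBot.1 hxcl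
    refine h1.mono (nhdsWithin_mono x ?_)
    intro y hy
    simp only [mem_compl_iff, mem_singleton_iff]
    rintro rfl
    exact hy hxF
  -- base case of the induction
  have hbase : ∀ I : Finset (Fin 0), 0 < μ (VCAtom W Λ F x (Fin.elim0) I) := by
    intro I
    set N : Set G := (fun l : G => x * l⁻¹) ⁻¹' W with hNdef
    have hNnhds : N ∈ nhds x := by
      refine ((continuous_const.mul continuous_inv).continuousAt).preimage_mem_nhds ?_
      simpa using hWnhds
    have hΛN : 0 < μ (Λ ∩ N) := hself x hxΛ N hNnhds
    have hsub : x • (Λ ∩ N)⁻¹ ⊆ VCAtom W Λ F x (Fin.elim0) I := by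
      rintro _ ⟨li, hli, rfl⟩
      rw [Set.mem_inv] at hli
      refine ⟨?_, ?_, fun i => i.elim0⟩
      · have h2 := hli.2
        rw [hNdef, mem_preimage, inv_inv] at h2
        show x * li ∈ W
        exact h2
      · show (x * li)⁻¹ * x ∈ Λ
        have h3 : (x * li)⁻¹ * x = li⁻¹ := by group
        rw [h3]
        exact hli.1
    refine lt_of_lt_of_le ?_ (measure_mono hsub)
    rw [measure_smul]
    rw [pos_iff_ne_zero]
    intro h0
    exact hΛN.ne' ((measure_inv_null μ).1 h0)
  -- the inductive construction
  have hGood : ∀ m : ℕ, ∃ a : Fin m → G, Function.Injective a ∧ (∀ i, a i ∈ V) ∧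
      ∀ I : Finset (Fin m), 0 < μ (VCAtom W Λ F x a I) := by
    intro m
    induction m with
    | zero =>
      exact ⟨Fin.elim0, fun i => i.elim0, fun i => i.elim0, hbase⟩
    | succ k ih =>
      obtain ⟨a, hainj, haV, hapos⟩ := ih
      obtain ⟨b, hbV, hbr, hbpos⟩ := hvc_step μ hF hUF hWmeas hWfin hΛmeas hΛF
        hwinK hK₂U hK₂c hVnhds hxV hNB haV hapos
      refine ⟨Fin.snoc a b, hvc_snoc_injective hainj hbr, ?_, hbpos⟩
      intro i
      induction i using Fin.lastCases with
      | last => rw [Fin.snoc_last]; exact hbV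
      | cast i => rw [Fin.snoc_castSucc]; exact haV i
  -- the contradiction with finite VC dimension
  obtain ⟨n, hn⟩ := hVC
  obtain ⟨a, hainj, -, hapos⟩ := hGood n
  set A : Finset G := Finset.image a Finset.univ with hAdef
  have hcard : A.card = n := by
    rw [hAdef, Finset.card_image_of_injective _ hainj, Finset.card_univ, Fintype.card_fin]
  refine hn A hcard ?_
  intro B hB
  set I : Finset (Fin n) := Finset.univ.filter (fun i => a i ∈ B) with hIdef
  obtain ⟨g, hg⟩ := nonempty_of_measure_ne_zero (hapos I).ne'
  refine ⟨g • F, ⟨g, rfl⟩, ?_⟩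
  ext y
  constructor
  · rintro ⟨hyS, hyA⟩
    rw [Finset.mem_coe, hAdef, Finset.mem_image] at hyA
    obtain ⟨i, -, rfl⟩ := hyA
    have hiI : i ∈ I := by
      by_contra hiI
      have := (hg.2.2 i).2 hiI
      rw [mem_smul_set_iff_inv_smul_mem, smul_eq_mul] at hyS
      exact this hyS
    rw [hIdef, Finset.mem_filter] at hiI
    exact hiI.2
  · intro hyB
    have hyA : y ∈ (A : Set G) := by
      rw [Finset.mem_coe]
      exact hB hyB
    refine ⟨?_, hyA⟩
    rw [Finset.mem_coe, hAdef, Finset.mem_image] at hyA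
    obtain ⟨i, -, rfl⟩ := hyA
    have hiI : i ∈ I := by
      rw [hIdef, Finset.mem_filter]
      exact ⟨Finset.mem_univ _, hyB⟩
    have := (hg.2.2 i).1 hiI
    rw [mem_smul_set_iff_inv_smul_mem, smul_eq_mul]
    exact hΛF this
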